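/- Let q = p be an odd prime and let U ⊆ F_p³ be a set of p² − 2 points that does not determine the points of C, is not extendable, and satisfies ∑_{u∈U} u = (0,0,0). Then for every nonzero (y,z,w) ∈ F_p³: the line at infinity l(y,z,w) meets C in no point (i.e. there is no nonzero t ∈ F_p³ with Q(t) = 0 and (y,z,w)·t = 0) if and only if σ₂(y,z,w) is a non-square in F_p. -/

import Mathlib

/-- The dot product on `F³`. -/
def dot3 {F : Type*} [Field F] (u v : F × F × F) : F :=
  u.1 * v.1 + u.2.1 * v.2.1 + u.2.2 * v.2.2

/-- The nondegenerate quadratic form `Q(t₀,t₁,t₂) = t₁² − t₀t₂` defining the conic `C`. -/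
def quadQ {F : Type*} [Field F] (t : F × F × F) : F :=
  t.2.1 ^ 2 - t.1 * t.2.2

/-- `U` does not determine the points of the conic `C`:
`Q(u − u') ≠ 0` for all distinct `u, u' ∈ U`. -/
def NoDetermine {F : Type*} [Field F] (U : Finset (F × F × F)) : Prop :=
  ∀ u ∈ U, ∀ u' ∈ U, u ≠ u' → quadQ (u - u') ≠ 0

/-- The line at infinity `l(y,z,w)` meets the conic `C`. -/
def MeetsConic {F : Type*} [Field F] (v : F × F × F) : Prop :=
  ∃ t : F × F × F, t ≠ 0 ∧ quadQ t = 0 ∧ dot3 v t = 0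

/-- `σ_i(y,z,w)`: the `i`-th elementary symmetric function of the multiset
`{u·(y,z,w) : u ∈ U}`. -/
def sigmaU {F : Type*} [Field F] (U : Finset (F × F × F)) (v : F × F × F) (i : ℕ) : F :=
  (U.val.map (fun u => dot3 u v)).esymm i

open Finset

/-- Rotation of coordinates. -/
def rot3 {F : Type*} [Field F] (x : F × F × F) : F × F × F := (x.2.1, x.2.2, x.1)

set_option linter.unusedSectionVars false

section Aux

variable {F : Type*} [Field F]

lemma esymm_two_eq (m : Multiset F) : 2 * m.esymm 2 = m.sum ^ 2 - (m.map (· ^ 2)).sum := by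
  induction m using Multiset.induction_on with
  | empty => simp [Multiset.esymm]; right; rfl
  | cons a s ih =>
      have h1 : (a ::ₘ s).esymm 2 = s.esymm 2 + a * s.sum := by
        rw [Multiset.esymm, Multiset.powersetCard_cons, Multiset.map_add, Multiset.sum_add]
        have h2 : ((s.powersetCard 1).map ((a ::ₘ ·) : Multiset F → Multiset F)).map
            Multiset.prod = (s.powersetCard 1).map (fun x => a * x.prod) := by
          rw [Multiset.map_map]
          exact Multiset.map_congr rfl (fun x _ => by simp [Multiset.prod_cons])
        rw [h2, Multiset.powersetCard_one, Multiset.map_map]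
        have h3 : (s.map ((fun x => a * Multiset.prod x) ∘ (singleton : F → Multiset F))).sum
            = a * s.sum := by
          rw [show ((fun x => a * Multiset.prod x) ∘ (singleton : F → Multiset F))
              = (fun b => a * b) from by funext b; simp]
          rw [Multiset.sum_map_mul_left]
          simp
        rw [h3]
        rfl
      rw [h1, Multiset.sum_cons, Multiset.map_cons, Multiset.sum_cons]
      ring_nf
      ring_nf at ih
      linear_combination ih

lemma dot3_comm (u v : F × F × F) : dot3 u v = dot3 v u := by simp only [dot3]; ring

lemma dot3_add_right (v x y : F × F × F) : dot3 v (x + y) = dot3 v x + dot3 v y := by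
  simp only [dot3, Prod.fst_add, Prod.snd_add]; ring

lemma dot3_sub_right (v x y : F × F × F) : dot3 v (x - y) = dot3 v x - dot3 v y := by
  simp only [dot3, Prod.fst_sub, Prod.snd_sub]; ring

lemma quadQ_neg (x : F × F × F) : quadQ (-x) = quadQ x := by
  simp only [quadQ, Prod.fst_neg, Prod.snd_neg]; ring

lemma triple_ne_zero {t : F × F × F} (ht : t ≠ 0) : t.1 ≠ 0 ∨ t.2.1 ≠ 0 ∨ t.2.2 ≠ 0 := by
  by_contra h
  push_neg at h
  exact ht (by ext <;> simp [h.1, h.2.1, h.2.2])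

lemma perp_perp {t x : F × F × F} (ht : t ≠ 0)
    (h : ∀ v : F × F × F, dot3 v t = 0 → dot3 v x = 0) : ∃ c : F, x = c • t := by
  rcases triple_ne_zero ht with h1 | h1 | h1
  · refine ⟨x.1 * t.1⁻¹, ?_⟩
    have e1 := h (-t.2.1, t.1, 0) (by simp [dot3]; ring)
    have e2 := h (-t.2.2, 0, t.1) (by simp [dot3]; ring)
    simp only [dot3] at e1 e2
    rw [Prod.ext_iff, Prod.ext_iff]
    simp only [Prod.smul_fst, Prod.smul_snd, smul_eq_mul]
    refine ⟨by field_simp, by field_simp; linear_combination e1,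
      by field_simp; linear_combination e2⟩
  · refine ⟨x.2.1 * t.2.1⁻¹, ?_⟩
    have e1 := h (t.2.1, -t.1, 0) (by simp [dot3]; ring)
    have e2 := h (0, -t.2.2, t.2.1) (by simp [dot3]; ring)
    simp only [dot3] at e1 e2
    rw [Prod.ext_iff, Prod.ext_iff]
    simp only [Prod.smul_fst, Prod.smul_snd, smul_eq_mul]
    refine ⟨by field_simp; linear_combination e1, by field_simp,
      by field_simp; linear_combination e2⟩
  · refine ⟨x.2.2 * t.2.2⁻¹, ?_⟩
    have e1 := h (t.2.2, 0, -t.1) (by simp [dot3]; ring)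
    have e2 := h (0, t.2.2, -t.2.1) (by simp [dot3]; ring)
    simp only [dot3] at e1 e2
    rw [Prod.ext_iff, Prod.ext_iff]
    simp only [Prod.smul_fst, Prod.smul_snd, smul_eq_mul]
    refine ⟨by field_simp; linear_combination e1, by field_simp; linear_combination e2,
      by field_simp⟩

lemma cover {t x y : F × F × F}
    (h : ∀ v : F × F × F, dot3 v t = 0 → dot3 v x * dot3 v y = 0) :
    (∀ v : F × F × F, dot3 v t = 0 → dot3 v x = 0) ∨
    (∀ v : F × F × F, dot3 v t = 0 → dot3 v y = 0) := by
  by_contra hc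
  push_neg at hc
  obtain ⟨⟨v1, hv1t, hv1⟩, ⟨v2, hv2t, hv2⟩⟩ := hc
  have h1 : dot3 v1 y = 0 := by
    rcases mul_eq_zero.1 (h v1 hv1t) with h' | h'
    · exact absurd h' hv1
    · exact h'
  have h2 : dot3 v2 x = 0 := by
    rcases mul_eq_zero.1 (h v2 hv2t) with h' | h'
    · exact h'
    · exact absurd h' hv2
  have hadd : dot3 (v1 + v2) t = 0 := by
    simp only [dot3, Prod.fst_add, Prod.snd_add] at *
    linear_combination hv1t + hv2t
  have h3 := h (v1 + v2) hadd
  simp only [dot3, Prod.fst_add, Prod.snd_add] at h3 h1 h2 hv1 hv2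
  rcases mul_eq_zero.1 h3 with h' | h'
  · exact hv1 (by linear_combination h' - h2)
  · exact hv2 (by linear_combination h' - h1)

lemma meets_iff_disc_sq (h2 : (2:F) ≠ 0) (v : F × F × F) :
    MeetsConic v ↔ ∃ s : F, s ^ 2 = v.2.1 ^ 2 - 4 * (v.1 * v.2.2) := by
  constructor
  · rintro ⟨t, ht0, htQ, hvt⟩
    simp only [quadQ] at htQ
    simp only [dot3] at hvt
    by_cases h1 : t.1 = 0
    · have ht2 : t.2.1 = 0 := by
        rw [h1] at htQ
        exact pow_eq_zero_iff (two_ne_zero) |>.1 (by linear_combination htQ)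
      have h3 : t.2.2 ≠ 0 := by
        rcases triple_ne_zero ht0 with h | h | h
        · exact absurd h1 h
        · exact absurd ht2 h
        · exact h
      have hv3 : v.2.2 = 0 := by
        rw [h1, ht2] at hvt
        have h4 : v.2.2 * t.2.2 = 0 := by linear_combination hvt
        rcases mul_eq_zero.1 h4 with h | h
        · exact h
        · exact absurd h h3
      exact ⟨v.2.1, by rw [hv3]; ring⟩
    · obtain ⟨τ, hτ1⟩ : ∃ τ : F, τ * t.1 = t.2.1 := ⟨t.2.1 / t.1, div_mul_cancel₀ _ h1⟩
      have ht22 : t.2.2 = τ ^ 2 * t.1 := by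
        have h5 : t.1 * t.2.2 = t.1 * (τ ^ 2 * t.1) := by
          linear_combination -htQ - (τ * t.1 + t.2.1) * hτ1
        exact mul_left_cancel₀ h1 h5
      have hEq : v.1 + v.2.1 * τ + v.2.2 * τ ^ 2 = 0 := by
        have h6 : (v.1 + v.2.1 * τ + v.2.2 * τ ^ 2) * t.1 = 0 := by
          linear_combination hvt + v.2.1 * hτ1 - v.2.2 * ht22
        rcases mul_eq_zero.1 h6 with h | h
        · exact h
        · exact absurd h h1
      exact ⟨v.2.1 + 2 * v.2.2 * τ, by linear_combination (4 * v.2.2) * hEq⟩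
  · rintro ⟨s, hs⟩
    by_cases hw : v.2.2 = 0
    · exact ⟨(0, 0, 1), by simp [Prod.ext_iff], by simp [quadQ], by simp [dot3, hw]⟩
    · have h4 : (4:F) ≠ 0 := by
        have h44 := mul_ne_zero h2 h2
        norm_num at h44
        exact h44
      obtain ⟨τ, hτ1⟩ : ∃ τ : F, τ * (2 * v.2.2) = s - v.2.1 :=
        ⟨(s - v.2.1) / (2 * v.2.2), div_mul_cancel₀ _ (mul_ne_zero h2 hw)⟩
      have hh : (v.1 + v.2.1 * τ + v.2.2 * τ ^ 2) * (4 * v.2.2) = 0 := by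
        linear_combination hs + (2 * v.2.2 * τ + s + v.2.1) * hτ1
      refine ⟨(1, τ, τ ^ 2), by simp [Prod.ext_iff], by simp [quadQ], ?_⟩
      rcases mul_eq_zero.1 hh with h | h
      · simp only [dot3]
        linear_combination h
      · exact absurd h (mul_ne_zero h4 hw)

end Aux

section AuxFin

variable {F : Type*} [Field F] [Fintype F]

lemma charF {p : ℕ} (hp : p.Prime) (hcard : Fintype.card F = p) : ringChar F = p := by
  have h0 : (p : F) = 0 := by
    rw [← hcard]; exact FiniteField.cast_card_eq_zero F
  exact CharP.ringChar_of_prime_eq_zero hp h0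

lemma two_ne_zero_of_odd {p : ℕ} (hp : p.Prime) (hodd : Odd p) (hcard : Fintype.card F = p) :
    (2 : F) ≠ 0 := by
  intro h
  have hc : ringChar F = p := charF hp hcard
  haveI : CharP F p := hc ▸ ringChar.charP F
  have hdvd : p ∣ 2 := (CharP.cast_eq_zero_iff F p 2).1 (by exact_mod_cast h)
  have hpeq := (Nat.prime_dvd_prime_iff_eq hp Nat.prime_two).1 hdvd
  rw [hpeq, Nat.odd_iff] at hodd
  norm_num at hodd

lemma natCast_surj {p : ℕ} (hp : p.Prime) (hcard : Fintype.card F = p) (x : F) :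
    ∃ m : ℕ, (m : F) = x := by
  haveI : Fact p.Prime := ⟨hp⟩
  haveI : CharP F p := (charF hp hcard) ▸ ringChar.charP F
  let φ := ZMod.castHom (dvd_refl p) F
  have hinj : Function.Injective φ := φ.injective
  have hbij : Function.Bijective φ := by
    rw [Fintype.bijective_iff_injective_and_card]
    exact ⟨hinj, by simp [hcard, ZMod.card]⟩
  obtain ⟨y, hy⟩ := hbij.2 x
  refine ⟨y.val, ?_⟩
  rw [← hy, show ((y.val : ℕ) : F) = φ ((y.val : ℕ) : ZMod p) from (map_natCast φ y.val).symm,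
    ZMod.natCast_rightInverse y]

lemma svq {p : ℕ} (hp : p.Prime) (hodd : Odd p) (hcard : Fintype.card F = p)
    (α β γ : F) (hα : ∃ r : F, α = r ^ 2)
    (h : ∀ t : F, ∃ s : F, s ^ 2 = α * t ^ 2 + β * t + γ) :
    β ^ 2 = 4 * (α * γ) := by
  have h2 : (2 : F) ≠ 0 := two_ne_zero_of_odd hp hodd hcard
  have hchar2 : ringChar F ≠ 2 := by
    rw [charF hp hcard]
    intro hc
    rw [hc, Nat.odd_iff] at hodd
    norm_num at hodd
  obtain ⟨r, rfl⟩ := hα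
  by_cases hr : r = 0
  · subst hr
    have hβ : β = 0 := by
      by_contra hβ
      obtain ⟨n, hn⟩ := FiniteField.exists_nonsquare hchar2
      obtain ⟨s, hs⟩ := h ((n - γ) / β)
      refine hn ⟨s, ?_⟩
      rw [← sq, hs]
      field_simp
      ring
    rw [hβ]
    ring
  · have h4 : (4 : F) ≠ 0 := by
      have h44 := mul_ne_zero h2 h2
      norm_num at h44
      exact h44
    have hα0 : (r : F) ^ 2 ≠ 0 := pow_ne_zero 2 hr
    have h4r : (4 : F) * r ^ 2 ≠ 0 := mul_ne_zero h4 hα0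
    obtain ⟨κ, hκrel⟩ : ∃ κ : F, 4 * r ^ 2 * κ = 4 * r ^ 2 * γ - β ^ 2 :=
      ⟨(4 * r ^ 2 * γ - β ^ 2) / (4 * r ^ 2), by field_simp⟩
    obtain ⟨δ, hδ⟩ : ∃ δ : F, δ * (2 * r ^ 2) = β :=
      ⟨β / (2 * r ^ 2), div_mul_cancel₀ _ (mul_ne_zero h2 hα0)⟩
    have hshift : ∀ s : F, ∃ e : F, e ^ 2 = r ^ 2 * s ^ 2 + κ := by
      intro s
      obtain ⟨e, he⟩ := h (s - δ)
      refine ⟨e, ?_⟩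
      have hms : (4 * r ^ 2) * (e ^ 2) = (4 * r ^ 2) * (r ^ 2 * s ^ 2 + κ) := by
        linear_combination (4 * r ^ 2) * he + (δ * (2 * r ^ 2) - β - 4 * r ^ 2 * s) * hδ - hκrel
      exact mul_left_cancel₀ h4r hms
    have hiter : ∀ n : ℕ, ∃ e : F, e ^ 2 = (n : F) * κ := by
      intro n
      induction n with
      | zero => exact ⟨0, by simp⟩
      | succ n ih =>
          obtain ⟨e, he⟩ := ih
          obtain ⟨e', he'⟩ := hshift (e * r⁻¹)
          have hred : r ^ 2 * (e * r⁻¹) ^ 2 = e ^ 2 := by field_simp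
          rw [hred] at he'
          refine ⟨e', ?_⟩
          rw [he', he]
          push_cast
          ring
    by_contra hne
    have hκ : κ ≠ 0 := by
      intro hc
      rw [hc, mul_zero] at hκrel
      exact hne (by linear_combination hκrel)
    obtain ⟨n, hn⟩ := FiniteField.exists_nonsquare hchar2
    obtain ⟨m, hm⟩ := natCast_surj hp hcard (n * κ⁻¹)
    obtain ⟨e, he⟩ := hiter m
    refine hn ⟨e, ?_⟩
    rw [← sq, he, hm]
    field_simp

lemma classify {p : ℕ} (hp : p.Prime) (hodd : Odd p) (hcard : Fintype.card F = p)
    (A B C a b c : F)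
    (H : ∀ y z w : F, (∃ s : F, s ^ 2 = z ^ 2 - 4 * (y * w)) →
      ∃ s : F, s ^ 2 = A * y ^ 2 + B * z ^ 2 + C * w ^ 2
        + 2 * (a * (y * z) + b * (y * w) + c * (z * w))) :
    (∃ s : F, s ≠ 0 ∧ ∀ y z w : F, A * y ^ 2 + B * z ^ 2 + C * w ^ 2
        + 2 * (a * (y * z) + b * (y * w) + c * (z * w)) = s ^ 2 * (z ^ 2 - 4 * (y * w)))
    ∨ (∃ P1 P2 P3 : F, ∀ y z w : F, A * y ^ 2 + B * z ^ 2 + C * w ^ 2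
        + 2 * (a * (y * z) + b * (y * w) + c * (z * w)) = (P1 * y + P2 * z + P3 * w) ^ 2) := by
  have h2 : (2 : F) ≠ 0 := two_ne_zero_of_odd hp hodd hcard
  have hchar2 : ringChar F ≠ 2 := by
    rw [charF hp hcard]
    intro hc
    rw [hc, Nat.odd_iff] at hodd
    norm_num at hodd
  have h4 : (4 : F) ≠ 0 := by
    have h44 := mul_ne_zero h2 h2
    norm_num at h44
    exact h44
  have hA : ∃ r : F, A = r ^ 2 := by
    obtain ⟨s, hs⟩ := H 1 0 0 ⟨0, by ring⟩
    exact ⟨s, by linear_combination -hs⟩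
  have hB : ∃ r : F, B = r ^ 2 := by
    obtain ⟨s, hs⟩ := H 0 1 0 ⟨1, by ring⟩
    exact ⟨s, by linear_combination -hs⟩
  have hC : ∃ r : F, C = r ^ 2 := by
    obtain ⟨s, hs⟩ := H 0 0 1 ⟨0, by ring⟩
    exact ⟨s, by linear_combination -hs⟩
  have hf : ∀ t : F, ∃ s : F, s ^ 2 = A * t ^ 2 + (-2 * a) * t + B := by
    intro t
    obtain ⟨s, hs⟩ := H (-t) 1 0 ⟨1, by ring⟩
    exact ⟨s, by linear_combination hs⟩
  have hab : a ^ 2 = A * B := by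
    have hsv := svq hp hodd hcard A (-2 * a) B hA hf
    have h44 : (4 : F) * a ^ 2 = 4 * (A * B) := by linear_combination hsv
    exact mul_left_cancel₀ h4 h44
  have hfg : ∀ t : F, (A * t ^ 3 - a * t ^ 2 - b * t + c) ^ 2
      = (A * t ^ 2 - 2 * a * t + B) * (A * t ^ 4 - 2 * b * t ^ 2 + C) := by
    intro t
    have hgs : ∃ s : F, A * t ^ 4 - 2 * b * t ^ 2 + C = s ^ 2 := by
      obtain ⟨s, hs⟩ := H (-t ^ 2) 0 1 ⟨2 * t, by ring⟩
      exact ⟨s, by linear_combination -hs⟩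
    have hmix : ∀ u : F, ∃ s : F, s ^ 2 = (A * t ^ 4 - 2 * b * t ^ 2 + C) * u ^ 2
        + (2 * (A * t ^ 3 - a * t ^ 2 - b * t + c)) * u + (A * t ^ 2 - 2 * a * t + B) := by
      intro u
      obtain ⟨s, hs⟩ := H (-t - u * t ^ 2) 1 u ⟨1 + 2 * (u * t), by ring⟩
      exact ⟨s, by linear_combination hs⟩
    have hsv := svq hp hodd hcard _ _ _ hgs hmix
    have h44 : (4 : F) * (A * t ^ 3 - a * t ^ 2 - b * t + c) ^ 2
        = 4 * ((A * t ^ 2 - 2 * a * t + B) * (A * t ^ 4 - 2 * b * t ^ 2 + C)) := by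
      linear_combination hsv
    exact mul_left_cancel₀ h4 h44
  have hc2 : c ^ 2 = B * C := by
    have := hfg 0
    linear_combination this
  by_cases hA0 : A = 0
  · subst hA0
    have ha0 : a = 0 := by
      by_contra ha
      obtain ⟨n, hn⟩ := FiniteField.exists_nonsquare hchar2
      have hna : (-2 : F) * a ≠ 0 := by
        intro hcon
        rcases mul_eq_zero.1 hcon with h' | h'
        · exact h2 (by linear_combination -h')
        · exact ha h'
      obtain ⟨s, hs⟩ := hf ((n - B) / (-2 * a))
      refine hn ⟨s, ?_⟩
      rw [← sq, hs]
      field_simp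
      ring
    subst ha0
    have h1 := hfg 1
    have hm1 := hfg (-1)
    have hbc : b * c = 0 := by
      have h44 : (4 : F) * (b * c) = 4 * 0 := by linear_combination hm1 - h1
      exact mul_left_cancel₀ h4 h44
    have hb2 : b ^ 2 = -2 * b * B := by
      have h22 : (2 : F) * b ^ 2 = 2 * (-2 * b * B) := by
        linear_combination h1 + hm1 - 2 * hc2
      exact mul_left_cancel₀ h2 h22
    by_cases hb0 : b = 0
    · subst hb0
      by_cases hB0 : B = 0
      · subst hB0
        have hcz : c = 0 := by
          have : c ^ 2 = 0 := by linear_combination hc2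
          exact pow_eq_zero_iff (two_ne_zero) |>.1 this
        subst hcz
        obtain ⟨e, hCe⟩ := hC
        exact Or.inr ⟨0, 0, e, fun y z w => by rw [hCe]; ring⟩
      · obtain ⟨s, rfl⟩ := hB
        have hs0 : s ≠ 0 := fun hcon => hB0 (by rw [hcon]; ring)
        refine Or.inr ⟨0, s, c * s⁻¹, fun y z w => ?_⟩
        field_simp
        linear_combination (-(w ^ 2)) * hc2
    · have hBne : B ≠ 0 := by
        intro hcon
        rw [hcon] at hb2
        exact hb0 (pow_eq_zero_iff (two_ne_zero) |>.1 (by linear_combination hb2))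
      have hcz : c = 0 := by
        rcases mul_eq_zero.1 hbc with h' | h'
        · exact absurd h' hb0
        · exact h'
      subst hcz
      have hCz : C = 0 := by
        rcases mul_eq_zero.1 (show B * C = 0 from by linear_combination -hc2) with h' | h'
        · exact absurd h' hBne
        · exact h'
      subst hCz
      obtain ⟨s, rfl⟩ := hB
      have hs0 : s ≠ 0 := fun hcon => hBne (by rw [hcon]; ring)
      have hbB : b = -2 * s ^ 2 := by
        have hf2 : b * (b + 2 * s ^ 2) = 0 := by linear_combination hb2
        rcases mul_eq_zero.1 hf2 with h' | h'
        · exact absurd h' hb0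
        · linear_combination h'
      exact Or.inl ⟨s, hs0, fun y z w => by linear_combination (2 * (y * w)) * hbB⟩
  · obtain ⟨r, rfl⟩ := hA
    have hr : r ≠ 0 := fun hcon => hA0 (by rw [hcon]; ring)
    have hr2 : (r : F) ^ 2 ≠ 0 := pow_ne_zero 2 hr
    obtain ⟨τ, hτ⟩ : ∃ τ : F, τ * r ^ 2 = a := ⟨a / r ^ 2, div_mul_cancel₀ _ hr2⟩
    have hfτ : r ^ 2 * τ ^ 2 - 2 * a * τ + B = 0 := by
      have hm : r ^ 2 * (r ^ 2 * τ ^ 2 - 2 * a * τ + B) = r ^ 2 * 0 := by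
        linear_combination (τ * r ^ 2 - a) * hτ - hab
      exact mul_left_cancel₀ hr2 hm
    have hhτ : r ^ 2 * τ ^ 3 - a * τ ^ 2 - b * τ + c = 0 := by
      have := hfg τ
      rw [hfτ, zero_mul] at this
      exact pow_eq_zero_iff (two_ne_zero) |>.1 this
    have hac : r ^ 2 * c = a * b := by
      have hτ2 : (τ * r ^ 2) ^ 2 = a ^ 2 := by rw [hτ]
      have hτ3 : (τ * r ^ 2) ^ 3 = a ^ 3 := by rw [hτ]
      have hm : r ^ 2 * (r ^ 2 * c) = r ^ 2 * (a * b) := by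
        linear_combination r ^ 4 * hhτ - hτ3 + a * hτ2 + b * r ^ 2 * hτ
      exact mul_left_cancel₀ hr2 hm
    have hkey : ∀ t : F, r ^ 4 * ((r ^ 2 * t ^ 3 - a * t ^ 2 - b * t + c) ^ 2
        - (r ^ 2 * t ^ 2 - 2 * a * t + B) * (r ^ 2 * t ^ 4 - 2 * b * t ^ 2 + C))
        = (r ^ 2 * t - a) ^ 2 * (b ^ 2 - r ^ 2 * C)
          + (a ^ 2 - r ^ 2 * B) * ((r ^ 2 * t ^ 2 - b) ^ 2 - (b ^ 2 - r ^ 2 * C))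
          + (r ^ 2 * c - a * b) * (2 * (r ^ 2 * t - a) * (r ^ 2 * t ^ 2 - b)
            + (r ^ 2 * c - a * b)) := by
      intro t
      ring
    have hb2AC : b ^ 2 = r ^ 2 * C := by
      have hthis := hkey (τ + 1)
      rw [hfg (τ + 1), sub_self, mul_zero] at hthis
      rw [show a ^ 2 - r ^ 2 * B = 0 from by linear_combination hab,
        show r ^ 2 * c - a * b = 0 from by linear_combination hac,
        zero_mul, zero_mul, add_zero, add_zero] at hthis
      rw [show r ^ 2 * (τ + 1) - a = r ^ 2 from by linear_combination hτ] at hthis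
      have hz : (r ^ 2) ^ 2 * (b ^ 2 - r ^ 2 * C) = 0 := hthis.symm
      rcases mul_eq_zero.1 hz with h' | h'
      · exact absurd h' (pow_ne_zero 2 hr2)
      · linear_combination h'
    refine Or.inr ⟨r, a * r⁻¹, b * r⁻¹, fun y z w => ?_⟩
    field_simp
    linear_combination (-(z ^ 2)) * hab + (-(w ^ 2)) * hb2AC + (2 * (z * w)) * hac

end AuxFin

section Counting

variable {F : Type*} [Field F] [Fintype F] [DecidableEq F]

lemma counting_aux {p : ℕ} (hp2 : 2 ≤ p) (hcard : Fintype.card F = p)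
    (U : Finset (F × F × F)) (hUcard : U.card = p ^ 2 - 2)
    (t : F × F × F) (ht1 : t.1 ≠ 0)
    (hline : ∀ u ∈ U, ∀ u' ∈ U, ∀ c : F, u = u' + c • t → u = u') :
    ∃ r₁ r₂ : F × F × F,
      (∀ u ∈ U, ∀ c : F, u ≠ r₁ + c • t) ∧ (∀ u ∈ U, ∀ c : F, u ≠ r₂ + c • t) ∧
      ∀ (g : F → F) (v : F × F × F), dot3 v t = 0 →
        ∑ u ∈ U, g (dot3 v u) = -(g (dot3 v r₁) + g (dot3 v r₂)) := by
  have hq0 : (p : F) = 0 := by rw [← hcard]; exact FiniteField.cast_card_eq_zero F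
  have hp2sq : 2 ≤ p ^ 2 := by nlinarith
  set ψ : F × F × F → F × F :=
    fun x => (x.2.1 - x.1 * t.1⁻¹ * t.2.1, x.2.2 - x.1 * t.1⁻¹ * t.2.2) with hψdef
  have hψaff : ∀ (x : F × F × F) (cc : F), ψ (x + cc • t) = ψ x := by
    intro x cc
    rw [hψdef, Prod.ext_iff]
    simp only [Prod.fst_add, Prod.snd_add, Prod.smul_fst, Prod.smul_snd, smul_eq_mul]
    constructor
    · field_simp; ring
    · field_simp; ring
  have hψinj : ∀ u ∈ U, ∀ u' ∈ U, ψ u = ψ u' → u = u' := by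
    intro u hu u' hu' heq
    rw [hψdef, Prod.ext_iff] at heq
    simp only at heq
    refine hline u hu u' hu' ((u.1 - u'.1) * t.1⁻¹) ?_
    rw [Prod.ext_iff, Prod.ext_iff]
    simp only [Prod.fst_add, Prod.snd_add, Prod.smul_fst, Prod.smul_snd, smul_eq_mul]
    refine ⟨by field_simp; ring, ?_, ?_⟩
    · have := heq.1
      field_simp at this ⊢
      linear_combination this
    · have := heq.2
      field_simp at this ⊢
      linear_combination this
  set Im : Finset (F × F) := U.image ψ with hImdef
  have hImcard : Im.card = p ^ 2 - 2 := by
    rw [hImdef, Finset.card_image_of_injOn (fun x hx y hy h => hψinj x hx y hy h), hUcard]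
  set R : Finset (F × F) := univ \ Im with hRdef
  have hcardFF : Fintype.card (F × F) = p ^ 2 := by
    rw [Fintype.card_prod, hcard, sq]
  have hRcard : R.card = 2 := by
    rw [hRdef, Finset.card_sdiff_of_subset (Finset.subset_univ _), Finset.card_univ, hcardFF, hImcard]
    omega
  obtain ⟨ρ1, ρ2, hρne, hR⟩ := Finset.card_eq_two.1 hRcard
  have hρ1im : ρ1 ∉ Im := by
    have : ρ1 ∈ R := by rw [hR]; exact mem_insert_self _ _
    exact (Finset.mem_sdiff.1 this).2
  have hρ2im : ρ2 ∉ Im := by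
    have : ρ2 ∈ R := by rw [hR]; exact mem_insert_of_mem (mem_singleton_self _)
    exact (Finset.mem_sdiff.1 this).2
  refine ⟨(0, ρ1.1, ρ1.2), (0, ρ2.1, ρ2.2), ?_, ?_, ?_⟩
  · intro u hu cc heq
    apply hρ1im
    have : ψ u = ρ1 := by
      rw [heq, hψaff]
      rw [hψdef]
      simp
    exact this ▸ Finset.mem_image_of_mem ψ hu
  · intro u hu cc heq
    apply hρ2im
    have : ψ u = ρ2 := by
      rw [heq, hψaff]
      rw [hψdef]
      simp
    exact this ▸ Finset.mem_image_of_mem ψ hu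
  · intro g v hvt
    by_cases hv0 : v = 0
    · subst hv0
      have hz : ∀ x : F × F × F, dot3 (0 : F × F × F) x = 0 := by
        intro x; simp [dot3]
      simp only [hz]
      rw [Finset.sum_const, hUcard, nsmul_eq_mul]
      have : ((p ^ 2 - 2 : ℕ) : F) = -2 := by
        rw [Nat.cast_sub hp2sq]
        push_cast
        rw [hq0]
        ring
      rw [this]
      ring
    · have hw12 : ¬(v.2.1 = 0 ∧ v.2.2 = 0) := by
        rintro ⟨hw1, hw2⟩
        apply hv0
        have hv1 : v.1 = 0 := by
          simp only [dot3, hw1, hw2] at hvt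
          rcases mul_eq_zero.1 (by linear_combination hvt : v.1 * t.1 = 0) with h | h
          · exact h
          · exact absurd h ht1
        rw [Prod.ext_iff, Prod.ext_iff]
        exact ⟨hv1, hw1, hw2⟩
      have hdot : ∀ x : F × F × F, dot3 v x = v.2.1 * (ψ x).1 + v.2.2 * (ψ x).2 := by
        intro x
        rw [hψdef]
        simp only [dot3] at hvt ⊢
        field_simp
        linear_combination x.1 * hvt
      have step1 : ∑ u ∈ U, g (dot3 v u) = ∑ x ∈ Im, g (v.2.1 * x.1 + v.2.2 * x.2) := by
        rw [hImdef, Finset.sum_image (fun x hx y hy h => hψinj x hx y hy h)]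
        exact Finset.sum_congr rfl (fun u _ => by rw [hdot])
      have hImR : univ \ R = Im := by
        rw [hRdef, Finset.sdiff_sdiff_self_left, Finset.inter_eq_right.2 (Finset.subset_univ _)]
      have equid : ∑ x : F × F, g (v.2.1 * x.1 + v.2.2 * x.2) = 0 := by
        rcases not_and_or.1 hw12 with hw | hw
        · rw [Fintype.sum_prod_type_right]
          have hinner : ∀ b : F, ∑ a : F, g (v.2.1 * a + v.2.2 * b) = ∑ y : F, g y := by
            intro b
            apply Fintype.sum_bijective (fun a : F => v.2.1 * a + v.2.2 * b)
            · constructor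
              · intro a a' h
                have : v.2.1 * a = v.2.1 * a' := by linear_combination h
                exact mul_left_cancel₀ hw this
              · intro y
                refine ⟨(y - v.2.2 * b) / v.2.1, ?_⟩
                field_simp
                ring
            · intro a; rfl
          simp only [hinner]
          rw [Finset.sum_const, Finset.card_univ, hcard, nsmul_eq_mul, hq0, zero_mul]
        · rw [Fintype.sum_prod_type]
          have hinner : ∀ a : F, ∑ b : F, g (v.2.1 * a + v.2.2 * b) = ∑ y : F, g y := by
            intro a
            apply Fintype.sum_bijective (fun b : F => v.2.1 * a + v.2.2 * b)
            · constructor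
              · intro b b' h
                have : v.2.2 * b = v.2.2 * b' := by linear_combination h
                exact mul_left_cancel₀ hw this
              · intro y
                refine ⟨(y - v.2.1 * a) / v.2.2, ?_⟩
                field_simp
                ring
            · intro b; rfl
          simp only [hinner]
          rw [Finset.sum_const, Finset.card_univ, hcard, nsmul_eq_mul, hq0, zero_mul]
      have hsplit : ∑ x ∈ univ \ R, g (v.2.1 * x.1 + v.2.2 * x.2)
          + ∑ x ∈ R, g (v.2.1 * x.1 + v.2.2 * x.2)
          = ∑ x : F × F, g (v.2.1 * x.1 + v.2.2 * x.2) :=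
        Finset.sum_sdiff (Finset.subset_univ _)
      rw [hImR] at hsplit
      have hRsum : ∑ x ∈ R, g (v.2.1 * x.1 + v.2.2 * x.2)
          = g (v.2.1 * ρ1.1 + v.2.2 * ρ1.2) + g (v.2.1 * ρ2.1 + v.2.2 * ρ2.2) := by
        rw [hR, Finset.sum_pair hρne]
      have hd1 : dot3 v (0, ρ1.1, ρ1.2) = v.2.1 * ρ1.1 + v.2.2 * ρ1.2 := by
        simp [dot3]
      have hd2 : dot3 v (0, ρ2.1, ρ2.2) = v.2.1 * ρ2.1 + v.2.2 * ρ2.2 := by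
        simp [dot3]
      rw [step1, hd1, hd2]
      rw [equid, hRsum] at hsplit
      linear_combination hsplit

lemma rot3_dot (u v : F × F × F) : dot3 (rot3 u) (rot3 v) = dot3 u v := by
  simp only [dot3, rot3]; ring

lemma rot3_rot3_rot3 (x : F × F × F) : rot3 (rot3 (rot3 x)) = x := rfl

lemma rot3_inj : Function.Injective (rot3 : F × F × F → F × F × F) := by
  intro a b h
  have := congrArg rot3 (congrArg rot3 h)
  rwa [rot3_rot3_rot3, rot3_rot3_rot3] at this

lemma rot3_add (x y : F × F × F) : rot3 (x + y) = rot3 x + rot3 y := rfl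

lemma rot3_smul (c : F) (x : F × F × F) : rot3 (c • x) = c • rot3 x := rfl

lemma counting_transport (U : Finset (F × F × F)) (t : F × F × F)
    (H : ∃ r₁ r₂ : F × F × F,
      (∀ u ∈ U.image rot3, ∀ c : F, u ≠ r₁ + c • rot3 t) ∧
      (∀ u ∈ U.image rot3, ∀ c : F, u ≠ r₂ + c • rot3 t) ∧
      ∀ (g : F → F) (v : F × F × F), dot3 v (rot3 t) = 0 →
        ∑ u ∈ U.image rot3, g (dot3 v u) = -(g (dot3 v r₁) + g (dot3 v r₂))) :
    ∃ r₁ r₂ : F × F × F,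
      (∀ u ∈ U, ∀ c : F, u ≠ r₁ + c • t) ∧ (∀ u ∈ U, ∀ c : F, u ≠ r₂ + c • t) ∧
      ∀ (g : F → F) (v : F × F × F), dot3 v t = 0 →
        ∑ u ∈ U, g (dot3 v u) = -(g (dot3 v r₁) + g (dot3 v r₂)) := by
  obtain ⟨r1, r2, hA1, hA2, hB⟩ := H
  refine ⟨rot3 (rot3 r1), rot3 (rot3 r2), ?_, ?_, ?_⟩
  · intro u hu c heq
    refine hA1 (rot3 u) (Finset.mem_image_of_mem _ hu) c ?_
    rw [heq, rot3_add, rot3_smul, rot3_rot3_rot3]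
  · intro u hu c heq
    refine hA2 (rot3 u) (Finset.mem_image_of_mem _ hu) c ?_
    rw [heq, rot3_add, rot3_smul, rot3_rot3_rot3]
  · intro g v hvt
    have hvt' : dot3 (rot3 v) (rot3 t) = 0 := by rw [rot3_dot]; exact hvt
    have hkey := hB g (rot3 v) hvt'
    rw [Finset.sum_image (fun x _ y _ h => rot3_inj h)] at hkey
    have hL : ∑ u ∈ U, g (dot3 (rot3 v) (rot3 u)) = ∑ u ∈ U, g (dot3 v u) :=
      Finset.sum_congr rfl (fun u _ => by rw [rot3_dot])
    rw [hL] at hkey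
    rw [hkey]
    have e1 : dot3 (rot3 v) r1 = dot3 v (rot3 (rot3 r1)) := by
      rw [← rot3_dot v (rot3 (rot3 r1)), rot3_rot3_rot3]
    have e2 : dot3 (rot3 v) r2 = dot3 v (rot3 (rot3 r2)) := by
      rw [← rot3_dot v (rot3 (rot3 r2)), rot3_rot3_rot3]
    rw [e1, e2]

lemma counting {p : ℕ} (hp2 : 2 ≤ p) (hcard : Fintype.card F = p)
    (U : Finset (F × F × F)) (hUcard : U.card = p ^ 2 - 2)
    (t : F × F × F) (ht : t ≠ 0)
    (hline : ∀ u ∈ U, ∀ u' ∈ U, ∀ c : F, u = u' + c • t → u = u') :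
    ∃ r₁ r₂ : F × F × F,
      (∀ u ∈ U, ∀ c : F, u ≠ r₁ + c • t) ∧ (∀ u ∈ U, ∀ c : F, u ≠ r₂ + c • t) ∧
      ∀ (g : F → F) (v : F × F × F), dot3 v t = 0 →
        ∑ u ∈ U, g (dot3 v u) = -(g (dot3 v r₁) + g (dot3 v r₂)) := by
  have himgcard : ∀ V : Finset (F × F × F), (V.image rot3).card = V.card :=
    fun V => Finset.card_image_of_injective V rot3_inj
  have hlineimg : ∀ (V : Finset (F × F × F)) (s : F × F × F),
      (∀ u ∈ V, ∀ u' ∈ V, ∀ c : F, u = u' + c • s → u = u') →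
      (∀ u ∈ V.image rot3, ∀ u' ∈ V.image rot3, ∀ c : F, u = u' + c • rot3 s → u = u') := by
    intro V s hl u hu u' hu' c heq
    obtain ⟨x, hx, rfl⟩ := Finset.mem_image.1 hu
    obtain ⟨x', hx', rfl⟩ := Finset.mem_image.1 hu'
    rw [← rot3_smul, ← rot3_add] at heq
    rw [hl x hx x' hx' c (rot3_inj heq)]
  rcases triple_ne_zero ht with h1 | h1 | h1
  · exact counting_aux hp2 hcard U hUcard t h1 hline
  · refine counting_transport U t ?_
    exact counting_aux hp2 hcard (U.image rot3) (by rw [himgcard, hUcard]) (rot3 t) h1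
      (hlineimg U t hline)
  · refine counting_transport U t ?_
    refine counting_transport (U.image rot3) (rot3 t) ?_
    exact counting_aux hp2 hcard ((U.image rot3).image rot3)
      (by rw [himgcard, himgcard, hUcard]) (rot3 (rot3 t)) h1
      (hlineimg _ _ (hlineimg U t hline))

end Counting

theorem stmt_17 {p : ℕ} (hp : p.Prime) (hodd : Odd p)
    {F : Type*} [Field F] [Fintype F] [DecidableEq F]
    (hcard : Fintype.card F = p)
    (U : Finset (F × F × F))
    (hUcard : U.card = p ^ 2 - 2)
    (hU : NoDetermine U)
    (hmax : ¬ ∃ v : F × F × F, v ∉ U ∧ NoDetermine (insert v U))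
    (hsum : ∑ u ∈ U, u = 0) :
    ∀ v : F × F × F, v ≠ 0 →
      (¬ MeetsConic v ↔ ¬ ∃ s : F, s ^ 2 = sigmaU U v 2) := by
  have hp2 : 2 ≤ p := hp.two_le
  have h2 : (2 : F) ≠ 0 := two_ne_zero_of_odd hp hodd hcard
  -- sum of the dot products vanishes
  have hsum1 : ∀ v : F × F × F, ∑ u ∈ U, dot3 u v = 0 := by
    intro v
    have e1 : (∑ u ∈ U, u).1 = ∑ u ∈ U, u.1 := map_sum (AddMonoidHom.fst F (F × F)) _ _
    have e2 : (∑ u ∈ U, u).2.1 = ∑ u ∈ U, u.2.1 :=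
      map_sum ((AddMonoidHom.fst F F).comp (AddMonoidHom.snd F (F × F))) _ _
    have e3 : (∑ u ∈ U, u).2.2 = ∑ u ∈ U, u.2.2 :=
      map_sum ((AddMonoidHom.snd F F).comp (AddMonoidHom.snd F (F × F))) _ _
    rw [hsum] at e1 e2 e3
    have hexp : ∑ u ∈ U, dot3 u v
        = (∑ u ∈ U, u.1) * v.1 + (∑ u ∈ U, u.2.1) * v.2.1 + (∑ u ∈ U, u.2.2) * v.2.2 := by
      rw [Finset.sum_mul, Finset.sum_mul, Finset.sum_mul, ← Finset.sum_add_distrib,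
        ← Finset.sum_add_distrib]
      rfl
    rw [hexp, ← e1, ← e2, ← e3]
    simp
  -- sigma₂ in terms of power sums
  have hsigma2 : ∀ v : F × F × F,
      2 * sigmaU U v 2 = (∑ u ∈ U, dot3 u v) ^ 2 - ∑ u ∈ U, (dot3 u v) ^ 2 := by
    intro v
    rw [sigmaU, esymm_two_eq, Multiset.map_map]
    rfl
  have hsigma2' : ∀ v : F × F × F, 2 * sigmaU U v 2 = -∑ u ∈ U, (dot3 u v) ^ 2 := by
    intro v
    rw [hsigma2 v, hsum1 v]
    ring
  -- no line in an isotropic direction contains two points of U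
  have hline_of : ∀ t : F × F × F, quadQ t = 0 →
      ∀ u ∈ U, ∀ u' ∈ U, ∀ c : F, u = u' + c • t → u = u' := by
    intro t htQ u hu u' hu' c heq
    by_contra hne
    apply hU u hu u' hu' hne
    have hd : u - u' = c • t := by rw [heq]; abel
    rw [hd]
    simp only [quadQ, Prod.smul_fst, Prod.smul_snd, smul_eq_mul]
    simp only [quadQ] at htQ
    linear_combination c ^ 2 * htQ
  -- Lemma: if the line meets the conic then sigma₂ is a square
  have hMeets_sq : ∀ v : F × F × F, MeetsConic v → ∃ s : F, s ^ 2 = sigmaU U v 2 := by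
    rintro v ⟨t, ht0, htQ, hvt⟩
    obtain ⟨r1, r2, _, _, hB⟩ := counting hp2 hcard U hUcard t ht0 (hline_of t htQ)
    have e1 := hB id v hvt
    have e2 := hB (fun x => x ^ 2) v hvt
    simp only [id] at e1
    have hcv : ∑ u ∈ U, dot3 v u = 0 := by
      rw [Finset.sum_congr rfl (fun u _ => dot3_comm v u)]
      exact hsum1 v
    rw [hcv] at e1
    have hr2 : dot3 v r2 = -dot3 v r1 := by linear_combination e1
    refine ⟨dot3 v r1, ?_⟩
    have hfl : 2 * sigmaU U v 2 = 2 * (dot3 v r1) ^ 2 := by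
      rw [hsigma2' v]
      rw [Finset.sum_congr rfl (fun u _ => by rw [dot3_comm u v])]
      rw [e2, hr2]
      ring
    exact (mul_left_cancel₀ h2 hfl).symm
  -- quadratic form coefficients of sigma₂
  have hpow_expand : ∀ y z w : F, ∑ u ∈ U, (dot3 u (y, z, w)) ^ 2
      = (∑ u ∈ U, u.1 ^ 2) * y ^ 2 + (∑ u ∈ U, u.2.1 ^ 2) * z ^ 2
        + (∑ u ∈ U, u.2.2 ^ 2) * w ^ 2
        + (∑ u ∈ U, u.1 * u.2.1) * (2 * (y * z))
        + (∑ u ∈ U, u.1 * u.2.2) * (2 * (y * w))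
        + (∑ u ∈ U, u.2.1 * u.2.2) * (2 * (z * w)) := by
    intro y z w
    have hterm : ∀ u : F × F × F, (dot3 u (y, z, w)) ^ 2
        = u.1 ^ 2 * y ^ 2 + u.2.1 ^ 2 * z ^ 2 + u.2.2 ^ 2 * w ^ 2
          + u.1 * u.2.1 * (2 * (y * z)) + u.1 * u.2.2 * (2 * (y * w))
          + u.2.1 * u.2.2 * (2 * (z * w)) := by
      intro u
      simp only [dot3]
      ring
    rw [Finset.sum_congr rfl (fun u _ => hterm u)]
    rw [Finset.sum_add_distrib, Finset.sum_add_distrib, Finset.sum_add_distrib,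
      Finset.sum_add_distrib, Finset.sum_add_distrib]
    rw [← Finset.sum_mul, ← Finset.sum_mul, ← Finset.sum_mul, ← Finset.sum_mul,
      ← Finset.sum_mul, ← Finset.sum_mul]
  obtain ⟨A, hcA⟩ : ∃ A : F, 2 * A = -(∑ u ∈ U, u.1 ^ 2) :=
    ⟨-(2⁻¹) * ∑ u ∈ U, u.1 ^ 2, by field_simp⟩
  obtain ⟨B, hcB⟩ : ∃ B : F, 2 * B = -(∑ u ∈ U, u.2.1 ^ 2) :=
    ⟨-(2⁻¹) * ∑ u ∈ U, u.2.1 ^ 2, by field_simp⟩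
  obtain ⟨C, hcC⟩ : ∃ C : F, 2 * C = -(∑ u ∈ U, u.2.2 ^ 2) :=
    ⟨-(2⁻¹) * ∑ u ∈ U, u.2.2 ^ 2, by field_simp⟩
  obtain ⟨a, hca⟩ : ∃ a : F, 2 * a = -(∑ u ∈ U, u.1 * u.2.1) :=
    ⟨-(2⁻¹) * ∑ u ∈ U, u.1 * u.2.1, by field_simp⟩
  obtain ⟨b, hcb⟩ : ∃ b : F, 2 * b = -(∑ u ∈ U, u.1 * u.2.2) :=
    ⟨-(2⁻¹) * ∑ u ∈ U, u.1 * u.2.2, by field_simp⟩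
  obtain ⟨c, hcc⟩ : ∃ c : F, 2 * c = -(∑ u ∈ U, u.2.1 * u.2.2) :=
    ⟨-(2⁻¹) * ∑ u ∈ U, u.2.1 * u.2.2, by field_simp⟩
  have form_eq : ∀ y z w : F, sigmaU U (y, z, w) 2
      = A * y ^ 2 + B * z ^ 2 + C * w ^ 2
        + 2 * (a * (y * z) + b * (y * w) + c * (z * w)) := by
    intro y z w
    apply mul_left_cancel₀ h2
    rw [hsigma2' (y, z, w), hpow_expand y z w]
    linear_combination (-(y ^ 2)) * hcA + (-(z ^ 2)) * hcB + (-(w ^ 2)) * hcC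
      + (-(2 * (y * z))) * hca + (-(2 * (y * w))) * hcb + (-(2 * (z * w))) * hcc
  -- premise of the classification lemma
  have Hpre : ∀ y z w : F, (∃ s : F, s ^ 2 = z ^ 2 - 4 * (y * w)) →
      ∃ s : F, s ^ 2 = A * y ^ 2 + B * z ^ 2 + C * w ^ 2
        + 2 * (a * (y * z) + b * (y * w) + c * (z * w)) := by
    intro y z w hD
    have hme : MeetsConic (y, z, w) := (meets_iff_disc_sq h2 (y, z, w)).2 hD
    obtain ⟨s, hs⟩ := hMeets_sq (y, z, w) hme
    exact ⟨s, by rw [hs, form_eq y z w]⟩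
  rcases classify hp hodd hcard _ _ _ _ _ _ Hpre with ⟨s0, hs0ne, hform⟩ | ⟨P1, P2, P3, hform⟩
  · -- sigma₂ = s0² · discriminant
    have hσD : ∀ v : F × F × F, sigmaU U v 2 = s0 ^ 2 * (v.2.1 ^ 2 - 4 * (v.1 * v.2.2)) := by
      intro v
      have := hform v.1 v.2.1 v.2.2
      rw [← form_eq v.1 v.2.1 v.2.2] at this
      exact this
    intro v hv
    constructor
    · intro hnm hsq
      obtain ⟨e, he⟩ := hsq
      apply hnm
      refine (meets_iff_disc_sq h2 v).2 ⟨e * s0⁻¹, ?_⟩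
      rw [hσD v] at he
      field_simp
      linear_combination he
    · intro hnsq hm
      exact hnsq (hMeets_sq v hm)
  · -- degenerate case: sigma₂ is the square of a linear form; contradiction with maximality
    exfalso
    set P : F × F × F := (P1, P2, P3) with hPdef
    have hσP : ∀ v : F × F × F, sigmaU U v 2 = (dot3 P v) ^ 2 := by
      intro v
      have := hform v.1 v.2.1 v.2.2
      rw [← form_eq v.1 v.2.1 v.2.2] at this
      rw [this, hPdef]
      simp only [dot3]
    have key : ∀ t : F × F × F, t ≠ 0 → quadQ t = 0 →
        ∀ u ∈ U, ∀ c : F, u ≠ P + c • t := by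
      intro t ht0 htQ
      obtain ⟨r1, r2, hA1, hA2, hB⟩ := counting hp2 hcard U hUcard t ht0 (hline_of t htQ)
      have hcv : ∀ v : F × F × F, ∑ u ∈ U, dot3 v u = 0 := by
        intro v
        rw [Finset.sum_congr rfl (fun u _ => dot3_comm v u)]
        exact hsum1 v
      have hsum0 : ∀ v : F × F × F, dot3 v t = 0 → dot3 v r1 + dot3 v r2 = 0 := by
        intro v hvt
        have e1 := hB id v hvt
        simp only [id] at e1
        rw [hcv v] at e1
        linear_combination e1
      have hsqP : ∀ v : F × F × F, dot3 v t = 0 → (dot3 v P) ^ 2 = (dot3 v r1) ^ 2 := by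
        intro v hvt
        have e2 := hB (fun x => x ^ 2) v hvt
        have hr2 : dot3 v r2 = -dot3 v r1 := by linear_combination hsum0 v hvt
        have hfl : 2 * sigmaU U v 2 = 2 * (dot3 v r1) ^ 2 := by
          rw [hsigma2' v]
          rw [Finset.sum_congr rfl (fun u _ => by rw [dot3_comm u v])]
          rw [e2, hr2]
          ring
        have hσv : sigmaU U v 2 = (dot3 v r1) ^ 2 := mul_left_cancel₀ h2 hfl
        rw [← hσv, hσP v, dot3_comm P v]
      have hprod : ∀ v : F × F × F, dot3 v t = 0 →
          dot3 v (P - r1) * dot3 v (P + r1) = 0 := by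
        intro v hvt
        rw [dot3_sub_right, dot3_add_right]
        linear_combination hsqP v hvt
      rcases cover hprod with hc | hc
      · obtain ⟨c0, hc0⟩ := perp_perp ht0 hc
        intro u hu c heq
        refine hA1 u hu (c0 + c) ?_
        have hP : P = r1 + c0 • t := by
          have : P - r1 = c0 • t := hc0
          rw [← this]; abel
        rw [heq, hP, add_smul]
        abel
      · obtain ⟨c0, hc0⟩ := perp_perp ht0 hc
        obtain ⟨c1, hc1⟩ := perp_perp ht0 (fun v hvt => by
          rw [dot3_add_right]; exact hsum0 v hvt : ∀ v : F × F × F,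
            dot3 v t = 0 → dot3 v (r1 + r2) = 0)
        intro u hu c heq
        refine hA2 u hu (c0 - c1 + c) ?_
        have hP : P = r2 + (c0 - c1) • t := by
          have h1' : P = c0 • t - r1 := by rw [← hc0]; abel
          have h2' : r1 = c1 • t - r2 := by rw [← hc1]; abel
          rw [h1', h2', sub_smul]
          abel
        rw [heq, hP, add_smul]
        abel
    have hPnotU : P ∉ U := by
      intro hP
      refine key ((0 : F), (0 : F), (1 : F)) ?_ (by simp [quadQ]) P hP 0 ?_
      · intro hcon
        rw [Prod.ext_iff, Prod.ext_iff] at hcon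
        exact one_ne_zero hcon.2.2
      · rw [zero_smul, add_zero]
    have hQP : ∀ u ∈ U, quadQ (u - P) ≠ 0 := by
      intro u hu h0
      have hne : u ≠ P := fun h => hPnotU (h ▸ hu)
      refine key (u - P) (sub_ne_zero.2 hne) h0 u hu 1 ?_
      rw [one_smul]
      abel
    apply hmax
    refine ⟨P, hPnotU, ?_⟩
    intro x hx x' hx' hne
    rcases Finset.mem_insert.1 hx with rfl | hxU
    · rcases Finset.mem_insert.1 hx' with rfl | hx'U
      · exact absurd rfl hne
      · rw [show P - x' = -(x' - P) from by abel, quadQ_neg]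
        exact hQP x' hx'U
    · rcases Finset.mem_insert.1 hx' with rfl | hx'U
      · exact hQP x hxU
      · exact hU x hxU x' hx'U hne
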